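/- Let T > 0 and let α : ℝ × [0,T] × ℝ → ℝ, (x,τ,φ) ↦ α(x,τ,φ), be twice continuously differentiable. Let V : ℝ × [0,T] → ℝ be sufficiently smooth (all partial derivatives ∂_t ∂_x^k V for k ≤ 2 and ∂_x^k V for k ≤ 4 exist and are continuous) with ∂_x V(x,t) > 0 for all (x,t), and define φ(x,τ) := −∂²_x V(x, T−τ) / ∂_x V(x, T−τ). If V satisfies ∂_t V(x,t) − α(x, T−t, φ(x, T−t)) ∂_x V(x,t) = 0 for all x ∈ ℝ and t ∈ (0,T), then φ satisfies the quasilinear parabolic equation in divergence form ∂_τ φ(x,τ) − ∂²_x [ α(x, τ, φ(x,τ)) ] = − ∂_x [ α(x, τ, φ(x,τ)) φ(x,τ) ] for all x ∈ ℝ and τ ∈ (0,T). -/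

import Mathlib

open Filter Topology Asymptotics


/-- Partial derivative in the first (spatial) variable of a function `f(x,t)`. -/
noncomputable def Dx (f : ℝ → ℝ → ℝ) : ℝ → ℝ → ℝ := fun x t => deriv (fun x' => f x' t) x

/-- Partial derivative in the second (time) variable of a function `f(x,t)`. -/
noncomputable def Dt (f : ℝ → ℝ → ℝ) : ℝ → ℝ → ℝ := fun x t => deriv (fun t' => f x t') t


lemma mvt' (f f' : ℝ → ℝ) (hf : ∀ s, HasDerivAt f (f' s) s) (a b : ℝ) (hab : a ≠ b) :
    ∃ c, |c - a| < |b - a| ∧ f' c = (f b - f a) / (b - a) := by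
  rcases lt_or_gt_of_ne hab with h | h
  · obtain ⟨c, hc, hceq⟩ := exists_hasDerivAt_eq_slope f f' h
      (fun s _ => (hf s).continuousAt.continuousWithinAt) (fun s _ => hf s)
    refine ⟨c, ?_, hceq⟩
    rw [abs_of_pos (sub_pos.2 hc.1), abs_of_pos (sub_pos.2 h)]
    linarith [hc.2]
  · obtain ⟨c, hc, hceq⟩ := exists_hasDerivAt_eq_slope f f' h
      (fun s _ => (hf s).continuousAt.continuousWithinAt) (fun s _ => hf s)
    refine ⟨c, ?_, ?_⟩
    · rw [abs_of_neg (sub_neg.2 hc.2), abs_of_neg (sub_neg.2 h)]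
      linarith [hc.1]
    · rw [hceq, ← neg_sub (f a) (f b), ← neg_sub a b, neg_div_neg_eq]

lemma schwarz (f fx fxt : ℝ → ℝ → ℝ) (x t : ℝ)
    (hfx : ∀ a b, HasDerivAt (fun s => f s b) (fx a b) a)
    (hfxt : ∀ a b, HasDerivAt (fun s => fx a s) (fxt a b) b)
    (hcont : ContinuousAt (fun q : ℝ × ℝ => fxt q.1 q.2) (x, t))
    (hft : ∀ a, DifferentiableAt ℝ (fun s => f a s) t) :
    HasDerivAt (fun a => deriv (fun s => f a s) t) (fxt x t) x := by
  set g : ℝ → ℝ := fun a => deriv (fun s => f a s) t with hg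
  set L := fxt x t with hL
  have hslope : ∀ a : ℝ, Tendsto (fun k => (f a (t + k) - f a t) / k) (𝓝[≠] (0:ℝ)) (𝓝 (g a)) := by
    intro a
    have h1 : HasDerivAt (fun s => f a s) (g a) t := (hft a).hasDerivAt
    have h2 := hasDerivAt_iff_tendsto_slope.mp h1
    have h3 : Tendsto (fun k : ℝ => t + k) (𝓝[≠] (0:ℝ)) (𝓝[≠] t) := by
      apply tendsto_nhdsWithin_of_tendsto_nhds_of_eventually_within
      · exact ((continuous_const.add continuous_id).tendsto' 0 t (by simp)).mono_left
          nhdsWithin_le_nhds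
      · filter_upwards [self_mem_nhdsWithin] with k hk
        simp only [Set.mem_compl_iff, Set.mem_singleton_iff]
        intro hc
        simp only [Set.mem_compl_iff, Set.mem_singleton_iff] at hk
        exact hk (by linarith)
    have h4 := h2.comp h3
    refine h4.congr fun k => ?_
    simp only [Function.comp_apply, slope_def_field]
    rw [add_sub_cancel_left]
  rw [hasDerivAt_iff_isLittleO, isLittleO_iff]
  intro ε hε
  obtain ⟨δ, hδ, hball⟩ : ∃ δ > 0, ∀ a b : ℝ, |a - x| < δ → |b - t| < δ → |fxt a b - L| ≤ ε := by
    obtain ⟨δ, hδ, hb⟩ := Metric.continuousAt_iff.mp hcont ε hε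
    refine ⟨δ, hδ, fun a b ha hb' => ?_⟩
    have hd : dist ((a, b) : ℝ × ℝ) (x, t) < δ := by
      rw [Prod.dist_eq]
      simp only [Real.dist_eq]
      exact max_lt ha hb'
    exact le_of_lt (by simpa [Real.dist_eq] using hb hd)
  filter_upwards [Metric.ball_mem_nhds x hδ] with y hy
  rcases eq_or_ne y x with rfl | hyx
  · simp
  have hyδ : |y - x| < δ := by simpa [Real.dist_eq] using hy
  have claim : ∀ k : ℝ, k ≠ 0 → |k| < δ →
      |((f y (t + k) - f y t) - (f x (t + k) - f x t)) / k - (y - x) * L| ≤ ε * |y - x| := by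
    intro k hk hkδ
    have hG : ∀ s, HasDerivAt (fun s' => f s' (t + k) - f s' t)
        (fx s (t + k) - fx s t) s := fun s => (hfx s (t + k)).sub (hfx s t)
    obtain ⟨ξ, hξ, hξeq⟩ := mvt' _ _ hG x y (Ne.symm hyx)
    obtain ⟨η, hη, hηeq⟩ := mvt' (fun s => fx ξ s) (fxt ξ) (fun s => hfxt ξ s) t (t + k)
      (by intro hc; exact hk (by linarith [hc]))
    rw [show t + k - t = k by ring] at hη hηeq
    have hclose : |fxt ξ η - L| ≤ ε := hball ξ η (lt_trans hξ hyδ) (lt_trans hη hkδ)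
    have hyx' : y - x ≠ 0 := sub_ne_zero.2 hyx
    have key : ((f y (t + k) - f y t) - (f x (t + k) - f x t)) / k = (y - x) * fxt ξ η := by
      rw [hηeq, hξeq, div_div, mul_div_assoc', mul_div_mul_left _ _ hyx']
    rw [key, ← mul_sub, abs_mul, mul_comm]
    exact mul_le_mul_of_nonneg_right hclose (abs_nonneg _)
  have hdiff : Tendsto (fun k => ((f y (t + k) - f y t) - (f x (t + k) - f x t)) / k)
      (𝓝[≠] (0:ℝ)) (𝓝 (g y - g x)) := by
    have := (hslope y).sub (hslope x)
    refine this.congr fun k => ?_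
    simp [sub_div]
  have habs : Tendsto (fun k => |((f y (t + k) - f y t) - (f x (t + k) - f x t)) / k - (y - x) * L|)
      (𝓝[≠] (0:ℝ)) (𝓝 |g y - g x - (y - x) * L|) := (hdiff.sub_const _).abs
  have hev : ∀ᶠ k in 𝓝[≠] (0:ℝ),
      |((f y (t + k) - f y t) - (f x (t + k) - f x t)) / k - (y - x) * L| ≤ ε * |y - x| := by
    have h5 : ∀ᶠ k in 𝓝 (0:ℝ), |k| < δ := by
      have := Metric.ball_mem_nhds (0:ℝ) hδ
      filter_upwards [this] with k hk
      simpa [Real.dist_eq] using hk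
    filter_upwards [self_mem_nhdsWithin, eventually_nhdsWithin_of_eventually_nhds h5] with k hk1 hk2
    exact claim k hk1 hk2
  have hfinal := le_of_tendsto habs hev
  simpa [Real.norm_eq_abs, smul_eq_mul, mul_comm] using hfinal

/-- Riccati transformation of the HJB equation: if `V(x,t)` is sufficiently smooth
(the partial derivatives `∂_t ∂_x^k V`, `k ≤ 2`, and `∂_x^k V`, `k ≤ 4`, exist and are
continuous), `∂_x V > 0`, `α` is twice continuously differentiable, and `V` satisfies
`∂_t V − α(x, T−t, φ(x,T−t)) ∂_x V = 0` where `φ(x,τ) = −∂²_x V(x,T−τ)/∂_x V(x,T−τ)`,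
then `φ` satisfies the quasilinear equation in divergence form
`∂_τ φ − ∂²_x[α(x,τ,φ(x,τ))] = −∂_x[α(x,τ,φ(x,τ)) φ(x,τ)]` on `ℝ × (0,T)`. -/
theorem stmt15 (T : ℝ) (hT : 0 < T)
    (α : ℝ × ℝ × ℝ → ℝ) (hα : ContDiff ℝ 2 α)
    (V : ℝ → ℝ → ℝ)
    (hVx : ∀ k ≤ 3, ∀ x t : ℝ, DifferentiableAt ℝ (fun x' => (Dx^[k] V) x' t) x)
    (hVtx : ∀ k ≤ 2, ∀ x t : ℝ, DifferentiableAt ℝ (fun t' => (Dx^[k] V) x t') t)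
    (hVxc : ∀ k ≤ 4, Continuous fun q : ℝ × ℝ => (Dx^[k] V) q.1 q.2)
    (hVtxc : ∀ k ≤ 2, Continuous fun q : ℝ × ℝ => Dt (Dx^[k] V) q.1 q.2)
    (hVpos : ∀ x t : ℝ, 0 < Dx V x t)
    (φ : ℝ → ℝ → ℝ)
    (hφ : ∀ x τ : ℝ, φ x τ = -(Dx^[2] V) x (T - τ) / Dx V x (T - τ))
    (hHJB : ∀ x : ℝ, ∀ t ∈ Set.Ioo (0 : ℝ) T,
      Dt V x t - α (x, T - t, φ x (T - t)) * Dx V x t = 0) :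
    ∀ x : ℝ, ∀ τ ∈ Set.Ioo (0 : ℝ) T,
      deriv (fun τ' => φ x τ') τ
          - deriv (fun x' => deriv (fun x'' => α (x'', τ, φ x'' τ)) x') x
        = -deriv (fun x' => α (x', τ, φ x' τ) * φ x' τ) x := by
  intro x τ hτ
  have htmem : T - τ ∈ Set.Ioo (0 : ℝ) T := ⟨by linarith [hτ.2], by linarith [hτ.1]⟩
  set t := T - τ with htdef
  have i2 : Dx^[2] V = Dx (Dx V) := by
    rw [show (2 : ℕ) = 1 + 1 from rfl, Function.iterate_succ_apply', Function.iterate_one]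
  have i3 : Dx^[3] V = Dx (Dx^[2] V) := by
    rw [show (3 : ℕ) = 2 + 1 from rfl, Function.iterate_succ_apply']
  have hne : ∀ a b : ℝ, Dx V a b ≠ 0 := fun a b => ne_of_gt (hVpos a b)
  -- spatial derivatives
  have hd0 : ∀ a b : ℝ, HasDerivAt (fun x' => V x' b) (Dx V a b) a := by
    intro a b
    have h := hVx 0 (by norm_num) a b
    simp only [Function.iterate_zero_apply] at h
    exact h.hasDerivAt
  have hd1 : ∀ a b : ℝ, HasDerivAt (fun x' => Dx V x' b) (Dx^[2] V a b) a := by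
    intro a b
    have h := hVx 1 (by norm_num) a b
    simp only [Function.iterate_one] at h
    rw [i2]
    exact h.hasDerivAt
  have hd2 : ∀ a b : ℝ, HasDerivAt (fun x' => Dx^[2] V x' b) (Dx^[3] V a b) a := by
    intro a b
    have h := hVx 2 (by norm_num) a b
    rw [i3]
    exact h.hasDerivAt
  have hd3 : ∀ a b : ℝ, DifferentiableAt ℝ (fun x' => Dx^[3] V x' b) a :=
    fun a b => hVx 3 le_rfl a b
  -- time derivatives
  have ht0 : ∀ a b : ℝ, HasDerivAt (fun t' => V a t') (Dt V a b) b := by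
    intro a b
    have h := hVtx 0 (by norm_num) a b
    simp only [Function.iterate_zero_apply] at h
    exact h.hasDerivAt
  have ht1 : ∀ a b : ℝ, HasDerivAt (fun t' => Dx V a t') (Dt (Dx V) a b) b := by
    intro a b
    have h := hVtx 1 (by norm_num) a b
    simp only [Function.iterate_one] at h
    exact h.hasDerivAt
  have ht2 : ∀ a b : ℝ, HasDerivAt (fun t' => Dx^[2] V a t') (Dt (Dx^[2] V) a b) b :=
    fun a b => (hVtx 2 le_rfl a b).hasDerivAt
  -- derivative of φ in x
  have hφeqx : (fun x' => φ x' τ) = fun x' => -(Dx^[2] V x' t) / Dx V x' t := by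
    funext x'
    rw [hφ]
  set ψ : ℝ → ℝ := fun a =>
    (-(Dx^[3] V a t) * Dx V a t - -(Dx^[2] V a t) * Dx^[2] V a t) / Dx V a t ^ 2 with hψdef
  have hφx : ∀ a : ℝ, HasDerivAt (fun x' => φ x' τ) (ψ a) a := by
    intro a
    rw [hφeqx, hψdef]
    exact ((hd2 a t).neg.div (hd1 a t) (hne a t))
  have hψdiff : DifferentiableAt ℝ ψ x := by
    rw [hψdef]
    exact DifferentiableAt.div
      (((hd3 x t).neg.mul (hd1 x t).differentiableAt).sub
        ((hd2 x t).differentiableAt.neg.mul (hd2 x t).differentiableAt))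
      ((hd1 x t).differentiableAt.pow 2) (pow_ne_zero 2 (hne x t))
  -- A and A'
  set A : ℝ → ℝ := fun x'' => α (x'', τ, φ x'' τ) with hA
  set A' : ℝ → ℝ := fun a => (fderiv ℝ α (a, τ, φ a τ)) (1, 0, ψ a) with hA'
  have hαdiff : Differentiable ℝ α := hα.differentiable (by norm_num)
  have hm : ∀ a : ℝ, HasDerivAt (fun x' => ((x', τ, φ x' τ) : ℝ × ℝ × ℝ))
      (((1 : ℝ), (0 : ℝ), ψ a)) a :=
    fun a => (hasDerivAt_id a).prodMk ((hasDerivAt_const a τ).prodMk (hφx a))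
  have hAd : ∀ a : ℝ, HasDerivAt A (A' a) a := by
    intro a
    rw [hA, hA']
    exact ((hαdiff (a, τ, φ a τ)).hasFDerivAt).comp_hasDerivAt a (hm a)
  have hA'diff : DifferentiableAt ℝ A' x := by
    rw [hA']
    refine DifferentiableAt.clm_apply ?_ ?_
    · have hc1 : ContDiff ℝ 1 (fderiv ℝ α) := hα.fderiv_right (by norm_num)
      exact ((hc1.differentiable (by norm_num)) (x, τ, φ x τ)).comp x (hm x).differentiableAt
    · exact (differentiableAt_const _).prodMk ((differentiableAt_const _).prodMk hψdiff)
  -- HJB at fixed time t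
  have hHJBt : ∀ a : ℝ, Dt V a t = A a * Dx V a t := by
    intro a
    have h := hHJB a t htmem
    have hτt : T - t = τ := by rw [htdef]; ring
    rw [hτt] at h
    rw [hA]
    linarith
  -- Schwarz 1
  have hcont1 : ContinuousAt (fun q : ℝ × ℝ => Dt (Dx V) q.1 q.2) (x, t) := by
    have h := hVtxc 1 (by norm_num)
    simp only [Function.iterate_one] at h
    exact h.continuousAt
  have schwarz1 : ∀ a : ℝ, HasDerivAt (fun a' => Dt V a' t) (Dt (Dx V) a t) a := by
    intro a
    have hc : ContinuousAt (fun q : ℝ × ℝ => Dt (Dx V) q.1 q.2) (a, t) := by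
      have h := hVtxc 1 (by norm_num)
      simp only [Function.iterate_one] at h
      exact h.continuousAt
    exact schwarz V (Dx V) (Dt (Dx V)) a t hd0 ht1 hc (fun p => (ht0 p t).differentiableAt)
  have hDtV1 : ∀ a : ℝ, Dt (Dx V) a t = A' a * Dx V a t + A a * Dx^[2] V a t := by
    intro a
    refine (schwarz1 a).unique ?_
    have heq : (fun a' => Dt V a' t) = fun a' => A a' * Dx V a' t := funext hHJBt
    rw [heq]
    exact (hAd a).mul (hd1 a t)
  -- Schwarz 2
  have hcont2 : ContinuousAt (fun q : ℝ × ℝ => Dt (Dx^[2] V) q.1 q.2) (x, t) :=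
    (hVtxc 2 le_rfl).continuousAt
  have schwarz2 : HasDerivAt (fun a => Dt (Dx V) a t) (Dt (Dx^[2] V) x t) x :=
    schwarz (Dx V) (Dx^[2] V) (Dt (Dx^[2] V)) x t hd1 ht2 hcont2
      (fun p => (ht1 p t).differentiableAt)
  have hA'd : HasDerivAt A' (deriv A' x) x := hA'diff.hasDerivAt
  have hE2 : Dt (Dx^[2] V) x t =
      (deriv A' x * Dx V x t + A' x * Dx^[2] V x t)
        + (A' x * Dx^[2] V x t + A x * Dx^[3] V x t) := by
    refine schwarz2.unique ?_
    have heq : (fun a => Dt (Dx V) a t) = fun a => A' a * Dx V a t + A a * Dx^[2] V a t :=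
      funext hDtV1
    rw [heq]
    exact (hA'd.mul (hd1 x t)).add ((hAd x).mul (hd2 x t))
  -- τ-derivative of φ
  have hτd : HasDerivAt (fun τ' => φ x τ')
      (((-(Dt (Dx^[2] V) x t) * Dx V x t - -(Dx^[2] V x t) * Dt (Dx V) x t) / Dx V x t ^ 2)
        * (-1)) τ := by
    have hq : HasDerivAt (fun t' => -(Dx^[2] V x t') / Dx V x t')
        ((-(Dt (Dx^[2] V) x t) * Dx V x t - -(Dx^[2] V x t) * Dt (Dx V) x t) / Dx V x t ^ 2)
        t := (ht2 x t).neg.div (ht1 x t) (hne x t)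
    have hl : HasDerivAt (fun τ' : ℝ => T - τ') (-1 : ℝ) τ := by
      simpa using (hasDerivAt_id τ).const_sub T
    have hcomp := HasDerivAt.comp τ (htdef ▸ hq) hl
    have heq : (fun τ' => φ x τ') =
        ((fun t' => -(Dx^[2] V x t') / Dx V x t') ∘ fun τ' => T - τ') := by
      funext τ'
      simp only [Function.comp_apply, hφ]
    rw [heq]
    exact hcomp
  -- assemble
  have goalτ := hτd.deriv
  have goalA : (fun x' => deriv (fun x'' => α (x'', τ, φ x'' τ)) x') = A' := by
    funext a
    rw [← hA]
    exact (hAd a).deriv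
  have goalR : deriv (fun x' => α (x', τ, φ x' τ) * φ x' τ) x = A' x * φ x τ + A x * ψ x := by
    have : (fun x' => α (x', τ, φ x' τ) * φ x' τ) = fun x' => A x' * φ x' τ := by rw [hA]
    rw [this]
    exact ((hAd x).mul (hφx x)).deriv
  rw [goalτ, goalA, goalR]
  have hφval : φ x τ = -(Dx^[2] V x t) / Dx V x t := by rw [hφ]
  rw [hE2, hDtV1 x, hφval, hψdef]
  have h1 := hne x t
  field_simp
  ring
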